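/- Let M be a von Neumann algebra acting on a complex Hilbert space H and let a be a positive element of M. Then a belongs to the center of M if and only if s a s ≤ a (in the Loewner order) for every selfadjoint unitary element s of M. -/

import Mathlib

open ContinuousLinearMap Filter
set_option synthInstance.maxHeartbeats 800000
set_option maxHeartbeats 1600000

namespace VNAux

variable {H : Type*} [NormedAddCommGroup H] [InnerProductSpace ℂ H] [CompleteSpace H]



/-- Cauchy–Schwarz-type bound for positive operators. -/
lemma norm_apply_sq_le {T : H →L[ℂ] H} (hT : T.IsPositive) (ξ : H) :
    ‖T ξ‖ ^ 2 ≤ ‖T‖ * RCLike.re ((inner ℂ (T ξ) ξ : ℂ)) := by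
  have h0 : (0 : H →L[ℂ] H) ≤ T := (nonneg_iff_isPositive T).mpr hT
  set r := CFC.sqrt T with hr
  have hrnn : (0 : H →L[ℂ] H) ≤ r := CFC.sqrt_nonneg (a := T)
  have hrsq : r * r = T := by simpa [sq] using CFC.sq_sqrt T h0
  have hrsa : IsSelfAdjoint r := IsSelfAdjoint.of_nonneg hrnn
  have hradj : ContinuousLinearMap.adjoint r = r := by
    rw [← ContinuousLinearMap.star_eq_adjoint]; exact hrsa.star_eq
  have hTξ : T ξ = r (r ξ) := by rw [← hrsq]; rfl
  have hnorm : ‖r‖ * ‖r‖ = ‖T‖ := by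
    rw [← hrsq, ← CStarRing.norm_star_mul_self (x := r), hrsa.star_eq]
  have hinner : RCLike.re ((inner ℂ (T ξ) ξ : ℂ)) = ‖r ξ‖ ^ 2 := by
    have h1 : (inner ℂ (T ξ) ξ : ℂ) = inner ℂ (r ξ) (r ξ) := by
      rw [hTξ, ← ContinuousLinearMap.adjoint_inner_left r, hradj]
    rw [h1, inner_self_eq_norm_sq (𝕜 := ℂ)]
  calc ‖T ξ‖ ^ 2 = ‖r (r ξ)‖ ^ 2 := by rw [hTξ]
    _ ≤ (‖r‖ * ‖r ξ‖) ^ 2 := by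
        have := r.le_opNorm (r ξ)
        exact pow_le_pow_left₀ (norm_nonneg _) this 2
    _ = (‖r‖ * ‖r‖) * ‖r ξ‖ ^ 2 := by ring
    _ = ‖T‖ * RCLike.re ((inner ℂ (T ξ) ξ : ℂ)) := by rw [hnorm, hinner]




/-- From `s a s ≤ a` (for a symmetry `s`) we get `a s = s a`. -/
lemma comm_of_pos_conj {a s : H →L[ℂ] H} (hs : IsSelfAdjoint s) (hss : s * s = 1)
    (h1 : (a - s * a * s).IsPositive) : a * s = s * a := by
  have hadj : ContinuousLinearMap.adjoint s = s := by
    rw [← ContinuousLinearMap.star_eq_adjoint]; exact hs.star_eq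
  have h2 : ((ContinuousLinearMap.adjoint s).comp ((a - s * a * s).comp s)).IsPositive :=
    h1.adjoint_conj s
  have hcomp : (ContinuousLinearMap.adjoint s).comp ((a - s * a * s).comp s)
      = s * a * s - a := by
    rw [hadj]
    have : s.comp ((a - s * a * s).comp s) = s * ((a - s * a * s) * s) := rfl
    rw [this, sub_mul, mul_sub]
    have h3 : s * (s * a * s * s) = a := by
      rw [show s * (s * a * s * s) = (s * s) * a * (s * s) by noncomm_ring, hss]
      simp
    rw [h3, ← mul_assoc]
  rw [hcomp] at h2
  have hle1 : s * a * s ≤ a := (le_def _ _).mpr h1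
  have hle2 : a ≤ s * a * s := (le_def _ _).mpr h2
  have heq : s * a * s = a := le_antisymm hle1 hle2
  calc a * s = (s * a * s) * s := by rw [heq]
    _ = s * a * (s * s) := by noncomm_ring
    _ = s * a := by rw [hss, mul_one]

/-- `a` commuting with all symmetries in `M` commutes with all projections in `M`. -/
lemma comm_of_proj {M : VonNeumannAlgebra H} {a : H →L[ℂ] H}
    (hsym : ∀ s ∈ M, IsSelfAdjoint s → s * s = 1 → a * s = s * a)
    {p : H →L[ℂ] H} (hp : p ∈ M) (hpsa : IsSelfAdjoint p) (hpp : p * p = p) :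
    a * p = p * a := by
  set s : H →L[ℂ] H := p + p - 1 with hs
  have hsM : s ∈ M := sub_mem (add_mem hp hp) (one_mem M)
  have hssa : IsSelfAdjoint s := by
    rw [hs]; simpa [IsSelfAdjoint, star_sub, star_add] using by rw [hpsa.star_eq]
  have hss : s * s = 1 := by
    rw [hs]
    simp only [sub_mul, mul_sub, add_mul, mul_add, mul_one, one_mul, hpp]
    abel
  have h := hsym s hsM hssa hss
  rw [hs] at h
  simp only [mul_sub, sub_mul, mul_add, add_mul, mul_one, one_mul] at h
  have h2 : a * p + a * p = p * a + p * a := sub_left_inj.mp h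
  have h3 : (2 : ℂ) • (a * p) = (2 : ℂ) • (p * a) := by
    rw [two_smul, two_smul]; exact h2
  exact smul_right_injective _ (two_ne_zero) h3




lemma isClosed_centralizer (S : Set (H →L[ℂ] H)) : IsClosed (Set.centralizer S) := by
  have : Set.centralizer S = ⋂ c ∈ S, {x : H →L[ℂ] H | c * x = x * c} := by
    ext x
    simp only [Set.mem_centralizer_iff, Set.mem_iInter, Set.mem_setOf_eq]
  rw [this]
  exact isClosed_biInter fun c _ =>
    isClosed_eq (continuous_const.mul continuous_id) (continuous_id.mul continuous_const)

lemma vna_isClosed (M : VonNeumannAlgebra H) : IsClosed (M : Set (H →L[ℂ] H)) := by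
  rw [← M.centralizer_centralizer]
  exact isClosed_centralizer _

lemma cfc_mem_vna (M : VonNeumannAlgebra H) {b : H →L[ℂ] H} (hb : b ∈ M)
    (hbsa : IsSelfAdjoint b) (f : ℝ → ℝ) : cfc f b ∈ M := by
  have hle : StarAlgebra.elemental ℂ b ≤ M.toStarSubalgebra :=
    StarAlgebra.elemental.le_of_mem (vna_isClosed M) hb
  by_cases hf : ContinuousOn f (spectrum ℝ b)
  · rw [cfc_real_eq_complex f hbsa]
    have hsn : IsStarNormal b := hbsa.isStarNormal
    have hmaps : Set.MapsTo Complex.re (spectrum ℂ b) (spectrum ℝ b) := by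
      intro x hx
      exact hbsa.spectrumRestricts.apply_mem hx
    have hcont : ContinuousOn (fun x : ℂ => (f x.re : ℂ)) (spectrum ℂ b) :=
      Complex.continuous_ofReal.comp_continuousOn
        (hf.comp Complex.continuous_re.continuousOn hmaps)
    rw [cfc_apply (fun x : ℂ => (f x.re : ℂ)) b, cfcHom_eq_of_isStarNormal]
    simp only [StarAlgHom.comp_apply, StarSubalgebra.coe_subtype]
    exact hle (Subtype.coe_prop _)
  · rw [cfc_apply_of_not_continuousOn b hf]
    exact zero_mem M.toStarSubalgebra





/-- Strong (pointwise) limit of a decreasing sequence of positive contractions. -/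
lemma exists_strong_limit (T : ℕ → H →L[ℂ] H) (hpos : ∀ n, (T n).IsPositive)
    (hmono : ∀ n, T (n + 1) ≤ T n) (hbd : ∀ n, ‖T n‖ ≤ 1) :
    ∃ P : H →L[ℂ] H, ∀ ξ : H, Tendsto (fun m => T m ξ) atTop (nhds (P ξ)) := by
  have hanti : Antitone T := antitone_nat_of_succ_le hmono
  -- scalar sequences
  have key : ∀ (ξ : H) (m n : ℕ), m ≤ n →
      ‖T m ξ - T n ξ‖ ^ 2 ≤ 2 * (RCLike.re ((inner ℂ (T m ξ) ξ : ℂ))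
        - RCLike.re ((inner ℂ (T n ξ) ξ : ℂ))) := by
    intro ξ m n hmn
    have hD : ((T m) - (T n)).IsPositive := by
      rw [← nonneg_iff_isPositive]
      exact sub_nonneg.mpr (hanti hmn)
    have h1 := norm_apply_sq_le hD ξ
    have hDnorm : ‖T m - T n‖ ≤ 2 := by
      calc ‖T m - T n‖ ≤ ‖T m‖ + ‖T n‖ := norm_sub_le _ _
        _ ≤ 1 + 1 := add_le_add (hbd m) (hbd n)
        _ = 2 := by norm_num
    have hre : RCLike.re ((inner ℂ ((T m - T n) ξ) ξ : ℂ))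
        = RCLike.re ((inner ℂ (T m ξ) ξ : ℂ)) - RCLike.re ((inner ℂ (T n ξ) ξ : ℂ)) := by
      rw [ContinuousLinearMap.sub_apply, inner_sub_left, map_sub]
    have hsub : (T m - T n) ξ = T m ξ - T n ξ := rfl
    rw [hsub, inner_sub_left, map_sub] at h1
    have hrnn : 0 ≤ RCLike.re ((inner ℂ (T m ξ) ξ : ℂ))
        - RCLike.re ((inner ℂ (T n ξ) ξ : ℂ)) := by
      have := hD.re_inner_nonneg_left ξ
      simpa [ContinuousLinearMap.reApplyInnerSelf, hsub, inner_sub_left] using this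
    calc ‖T m ξ - T n ξ‖ ^ 2 ≤ ‖T m - T n‖ * _ := h1
      _ ≤ 2 * _ := by apply mul_le_mul_of_nonneg_right hDnorm hrnn
  have hcauchy : ∀ ξ : H, CauchySeq (fun m => T m ξ) := by
    intro ξ
    set α : ℕ → ℝ := fun m => RCLike.re ((inner ℂ (T m ξ) ξ : ℂ)) with hα
    have hαanti : Antitone α := by
      intro m n hmn
      have := key ξ m n hmn
      nlinarith [sq_nonneg ‖T m ξ - T n ξ‖]
    have hαbd : ∀ m, 0 ≤ α m := fun m => (hpos m).re_inner_nonneg_left ξ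
    have hαconv : ∃ l, Tendsto α atTop (nhds l) :=
      ⟨_, tendsto_atTop_ciInf hαanti ⟨0, fun x ⟨m, hm⟩ => hm ▸ hαbd m⟩⟩
    obtain ⟨l, hl⟩ := hαconv
    have hαcs : CauchySeq α := hl.cauchySeq
    rw [Metric.cauchySeq_iff] at hαcs ⊢
    intro ε hε
    obtain ⟨N, hN⟩ := hαcs (ε ^ 2 / 2) (by positivity)
    refine ⟨N, fun m hm n hn => ?_⟩
    -- wlog n ≤ m
    have main : ∀ p q, N ≤ p → N ≤ q → p ≤ q → dist (T q ξ) (T p ξ) < ε := by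
      intro p q hp hq hpq
      have h1 := key ξ p q hpq
      have h2 := hN p hp q hq
      rw [Real.dist_eq] at h2
      have h3 : ‖T p ξ - T q ξ‖ ^ 2 < ε ^ 2 := by
        have : α p - α q ≤ |α p - α q| := le_abs_self _
        nlinarith
      rw [dist_eq_norm, ← norm_neg]
      have h4 : -(T q ξ - T p ξ) = T p ξ - T q ξ := by abel
      rw [h4]
      nlinarith [norm_nonneg (T p ξ - T q ξ)]
    rcases le_total m n with h | h
    · rw [dist_comm]; exact main m n hm hn h
    · exact main n m hn hm h
  have hconv : ∀ ξ : H, ∃ y : H, Tendsto (fun m => T m ξ) atTop (nhds y) :=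
    fun ξ => cauchySeq_tendsto_of_complete (hcauchy ξ)
  choose F hF using hconv
  have hFadd : ∀ ξ η, F (ξ + η) = F ξ + F η := by
    intro ξ η
    refine tendsto_nhds_unique ?_ ((hF ξ).add (hF η))
    simpa [map_add] using hF (ξ + η)
  have hFsmul : ∀ (c : ℂ) ξ, F (c • ξ) = c • F ξ := by
    intro c ξ
    refine tendsto_nhds_unique ?_ ((hF ξ).const_smul c)
    simpa [map_smul] using hF (c • ξ)
  have hFbd : ∀ ξ, ‖F ξ‖ ≤ 1 * ‖ξ‖ := by
    intro ξ
    refine le_of_tendsto (hF ξ).norm (Eventually.of_forall fun m => ?_)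
    calc ‖T m ξ‖ ≤ ‖T m‖ * ‖ξ‖ := (T m).le_opNorm ξ
      _ ≤ 1 * ‖ξ‖ := by gcongr; exact hbd m
  let P : H →L[ℂ] H := LinearMap.mkContinuous
    { toFun := F, map_add' := hFadd, map_smul' := hFsmul } 1 hFbd
  exact ⟨P, hF⟩



/-- Key pointwise estimate for the piecewise-linear telescoping approximation. -/
lemma real_approx (K δ : ℝ) (hδ : 0 < δ) (N : ℕ) (hN : K ≤ -K + N * δ)
    (m : ℕ) (t : ℝ) (ht1 : -K ≤ t) (ht2 : t ≤ K) :
    0 ≤ (-K + N * δ) - δ * (∑ i ∈ Finset.range N,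
        ((max (-K + (i + 1 : ℕ) * δ) t - max (-K + (i : ℕ) * δ) t) / δ) ^ (m + 1)) - t ∧
      (-K + N * δ) - δ * (∑ i ∈ Finset.range N,
        ((max (-K + (i + 1 : ℕ) * δ) t - max (-K + (i : ℕ) * δ) t) / δ) ^ (m + 1)) - t ≤ δ := by
  set lam : ℕ → ℝ := fun i => -K + i * δ with hlam
  set F : ℕ → ℝ := fun i => max (lam i) t with hF
  set g : ℕ → ℝ := fun i => (F (i + 1) - F i) / δ with hg
  have hlam_mono : ∀ i j : ℕ, i ≤ j → lam i ≤ lam j := by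
    intro i j hij
    simp only [hlam]
    have : (i : ℝ) ≤ j := Nat.cast_le.mpr hij
    nlinarith
  have hF0 : F 0 = t := by simp [hF, hlam, max_eq_right ht1]
  have hFN : F N = lam N := by
    simp only [hF]
    exact max_eq_left (ht2.trans hN)
  have hg0 : ∀ i, 0 ≤ g i := by
    intro i
    apply div_nonneg _ hδ.le
    have := hlam_mono i (i + 1) (by omega)
    simp only [hF]
    exact sub_nonneg.mpr (max_le_max_right t this)
  have hg1 : ∀ i, g i ≤ 1 := by
    intro i
    rw [hg, div_le_one hδ]
    have h1 : lam (i + 1) - lam i = δ := by simp [hlam]; push_cast; ring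
    have h2 : F (i + 1) ≤ δ + F i := by
      simp only [hF]
      apply max_le
      · have : lam i ≤ max (lam i) t := le_max_left _ _
        linarith [h1]
      · have : t ≤ max (lam i) t := le_max_right _ _
        linarith
    linarith
  have hsum : ∑ i ∈ Finset.range N, g i = (lam N - t) / δ := by
    simp only [hg]
    rw [← Finset.sum_div, Finset.sum_range_sub F]
    rw [hFN, hF0]
  have hstep : ∀ i, g i ≤ g (i + 1) ^ (m + 1) := by
    intro i
    rcases le_total t (lam (i + 1)) with h | h
    · have hgi1 : g (i + 1) = 1 := by
        show (F (i + 1 + 1) - F (i + 1)) / δ = 1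
        have e1 : F (i + 2) = lam (i + 2) := max_eq_left (h.trans (hlam_mono _ _ (by omega)))
        have e2 : F (i + 1) = lam (i + 1) := max_eq_left h
        rw [show i + 1 + 1 = i + 2 from rfl, e1, e2]
        rw [div_eq_one_iff_eq hδ.ne']
        simp [hlam]; push_cast; ring
      rw [hgi1, one_pow]
      exact hg1 i
    · have hgi : g i = 0 := by
        show (F (i + 1) - F i) / δ = 0
        have e1 : F (i + 1) = t := max_eq_right h
        have e2 : F i = t := max_eq_right ((hlam_mono i (i + 1) (by omega)).trans h)
        rw [e1, e2, sub_self, zero_div]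
      rw [hgi]
      exact pow_nonneg (hg0 _) _
  have hSle : ∑ i ∈ Finset.range N, g i ^ (m + 1) ≤ ∑ i ∈ Finset.range N, g i :=
    Finset.sum_le_sum fun i _ => pow_le_of_le_one (hg0 i) (hg1 i) (by omega)
  have hSge : ∑ i ∈ Finset.range N, g i - 1 ≤ ∑ i ∈ Finset.range N, g i ^ (m + 1) := by
    cases N with
    | zero => simp
    | succ n =>
      have e1 : ∑ i ∈ Finset.range (n + 1), g i ^ (m + 1)
          = (∑ i ∈ Finset.range n, g (i + 1) ^ (m + 1)) + g 0 ^ (m + 1) :=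
        Finset.sum_range_succ' _ n
      have e2 : ∑ i ∈ Finset.range (n + 1), g i = (∑ i ∈ Finset.range n, g i) + g n :=
        Finset.sum_range_succ _ n
      have e3 : ∑ i ∈ Finset.range n, g i ≤ ∑ i ∈ Finset.range n, g (i + 1) ^ (m + 1) :=
        Finset.sum_le_sum fun i _ => hstep i
      have e4 : g 0 ^ (m + 1) ≥ 0 := pow_nonneg (hg0 _) _
      have e5 : g n ≤ 1 := hg1 n
      linarith
  -- final
  have hSsum : ∑ i ∈ Finset.range N,
      ((max (-K + (i + 1 : ℕ) * δ) t - max (-K + (i : ℕ) * δ) t) / δ) ^ (m + 1)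
      = ∑ i ∈ Finset.range N, g i ^ (m + 1) := by
    apply Finset.sum_congr rfl
    intro i _
    simp [hg, hF, hlam]
  rw [hSsum]
  have hlamN : lam N = -K + N * δ := rfl
  constructor
  · have : δ * ∑ i ∈ Finset.range N, g i ^ (m + 1) ≤ δ * ((lam N - t) / δ) := by
      rw [← hsum]; exact mul_le_mul_of_nonneg_left hSle hδ.le
    rw [mul_div_cancel₀ _ hδ.ne'] at this
    linarith [hlamN]
  · have : δ * ((lam N - t) / δ - 1) ≤ δ * ∑ i ∈ Finset.range N, g i ^ (m + 1) := by
      have := hSge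
      rw [hsum] at this
      exact mul_le_mul_of_nonneg_left this hδ.le
    rw [mul_sub, mul_div_cancel₀ _ hδ.ne', mul_one] at this
    linarith [hlamN]




/-- From a `[0,1]`-valued continuous function `g` and selfadjoint `b ∈ M`, the strong limit
of `cfc (g ^ (m+1)) b` is a projection in `M`. -/
lemma exists_projection (M : VonNeumannAlgebra H) {b : H →L[ℂ] H} (hb : b ∈ M)
    (hbsa : IsSelfAdjoint b) (g : ℝ → ℝ) (hgc : Continuous g)
    (hg0 : ∀ t, 0 ≤ g t) (hg1 : ∀ t, g t ≤ 1) :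
    ∃ p : H →L[ℂ] H, p ∈ M ∧ IsSelfAdjoint p ∧ p * p = p ∧
      ∀ ξ : H, Tendsto (fun m : ℕ => cfc (fun t => g t ^ (m + 1)) b ξ) atTop (nhds (p ξ)) := by
  set T : ℕ → H →L[ℂ] H := fun m => cfc (fun t => g t ^ (m + 1)) b with hT
  have hTc : ∀ m : ℕ, Continuous fun t => g t ^ (m + 1) := fun m => hgc.pow _
  have hTpos : ∀ m, (T m).IsPositive := by
    intro m
    rw [← nonneg_iff_isPositive]
    exact cfc_nonneg fun t _ => pow_nonneg (hg0 t) _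
  have hTsa : ∀ m, IsSelfAdjoint (T m) := fun m => cfc_predicate _ b
  have hTmono : ∀ m, T (m + 1) ≤ T m := by
    intro m
    apply cfc_mono (fun t _ => pow_le_pow_of_le_one (hg0 t) (hg1 t) (by omega))
      ((hTc (m+1)).continuousOn) ((hTc m).continuousOn)
  have hTbd : ∀ m, ‖T m‖ ≤ 1 := by
    intro m
    apply norm_cfc_le zero_le_one
    intro t _
    rw [Real.norm_eq_abs, abs_of_nonneg (pow_nonneg (hg0 t) _)]
    exact pow_le_one₀ (hg0 t) (hg1 t)
  have hTmem : ∀ m, T m ∈ M := fun m => cfc_mem_vna M hb hbsa _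
  obtain ⟨P, hP⟩ := exists_strong_limit T hTpos hTmono hTbd
  -- P ∈ M
  have hPmem : P ∈ M := by
    rw [← SetLike.mem_coe, ← M.centralizer_centralizer]
    intro c hc
    ext ξ
    have h1 : ∀ m, c * T m = T m * c := fun m => (hc (T m) (hTmem m)).symm
    have h2 : Tendsto (fun m => c ((T m) ξ)) atTop (nhds (c (P ξ))) :=
      (c.continuous.tendsto _).comp (hP ξ)
    have h3 : ∀ m, c ((T m) ξ) = (T m) (c ξ) := by
      intro m
      have := congrArg (fun x => x ξ) (h1 m)
      simpa using this
    rw [show (c * P) ξ = c (P ξ) from rfl]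
    rw [show (P * c) ξ = P (c ξ) from rfl]
    refine tendsto_nhds_unique ?_ (hP (c ξ))
    simpa [h3] using h2
  -- selfadjoint
  have hPsym : ∀ ξ η : H, (inner ℂ (P ξ) η : ℂ) = inner ℂ ξ (P η) := by
    intro ξ η
    have h1 : Tendsto (fun m => (inner ℂ ((T m) ξ) η : ℂ)) atTop (nhds (inner ℂ (P ξ) η)) :=
      (hP ξ).inner tendsto_const_nhds
    have h2 : Tendsto (fun m => (inner ℂ ξ ((T m) η) : ℂ)) atTop (nhds (inner ℂ ξ (P η))) :=
      tendsto_const_nhds.inner (hP η)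
    refine tendsto_nhds_unique ?_ h2
    convert h1 using 2 with m
    exact (((isSelfAdjoint_iff_isSymmetric).mp (hTsa m)) ξ η).symm
  have hPsa : IsSelfAdjoint P := by
    rw [isSelfAdjoint_iff_isSymmetric]
    exact fun ξ η => hPsym ξ η
  -- idempotent
  have hsubseq : Tendsto (fun m : ℕ => 2 * m + 1) atTop atTop :=
    tendsto_atTop_atTop_of_monotone (fun x y h => by omega) (fun n => ⟨n, by omega⟩)
  have hmul : ∀ m : ℕ, T m * T m = T (2 * m + 1) := by
    intro m
    rw [hT]
    rw [← cfc_mul (fun t => g t ^ (m + 1)) (fun t => g t ^ (m + 1)) b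
      (hTc m).continuousOn (hTc m).continuousOn]
    congr 1
    funext t
    ring
  have hPP : P * P = P := by
    have hzero : ∀ ξ : H, (inner ℂ (((P * P - P) : H →L[ℂ] H) ξ) ξ : ℂ) = 0 := by
      intro ξ
      have e2 : Tendsto (fun m => (inner ℂ ((T m) ξ) ((T m) ξ) : ℂ)) atTop
          (nhds (inner ℂ (P ξ) (P ξ))) := (hP ξ).inner (hP ξ)
      have e3 : ∀ m : ℕ, (inner ℂ ((T m) ξ) ((T m) ξ) : ℂ) = inner ℂ ((T (2 * m + 1)) ξ) ξ := by
        intro m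
        have hsymm := (isSelfAdjoint_iff_isSymmetric).mp (hTsa m)
        have : (inner ℂ ((T m) ((T m) ξ)) ξ : ℂ) = inner ℂ ((T m) ξ) ((T m) ξ) := hsymm ((T m) ξ) ξ
        rw [← this, show (T m) ((T m) ξ) = (T m * T m) ξ from rfl, hmul m]
      have e4 : Tendsto (fun m : ℕ => (inner ℂ ((T (2 * m + 1)) ξ) ξ : ℂ)) atTop
          (nhds (inner ℂ (P ξ) ξ)) :=
        (((hP ξ).inner tendsto_const_nhds)).comp hsubseq
      have e5 : (inner ℂ (P ξ) (P ξ) : ℂ) = inner ℂ (P ξ) ξ := by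
        refine tendsto_nhds_unique ?_ e4
        simpa [← e3] using e2
      have e1 : (inner ℂ ((P * P) ξ) ξ : ℂ) = inner ℂ (P ξ) (P ξ) := by
        rw [show (P * P) ξ = P (P ξ) from rfl]
        exact hPsym (P ξ) ξ
      rw [ContinuousLinearMap.sub_apply, inner_sub_left, e1, e5, sub_self]
    have hlin : ((P * P - P : H →L[ℂ] H) : H →ₗ[ℂ] H) = 0 :=
      (inner_map_self_eq_zero _).mp fun ξ => hzero ξ
    have : (P * P - P : H →L[ℂ] H) = 0 := ContinuousLinearMap.coe_injective (by simpa using hlin)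
    exact sub_eq_zero.mp this
  exact ⟨P, hPmem, hPsa, hPP, hP⟩




lemma comm_selfadjoint (M : VonNeumannAlgebra H) {a : H →L[ℂ] H}
    (hproj : ∀ p ∈ M, IsSelfAdjoint p → p * p = p → a * p = p * a)
    {c : H →L[ℂ] H} (hc : c ∈ M) (hcsa : IsSelfAdjoint c) : a * c = c * a := by
  by_cases hH : Subsingleton H
  · ext ξ; exact Subsingleton.elim _ _
  have : Nontrivial H := not_subsingleton_iff_nontrivial.mp hH
  suffices happ : ∀ δ : ℝ, 0 < δ → ‖a * c - c * a‖ ≤ (2 * ‖a‖ + 1) * δ by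
    have h0 : ‖a * c - c * a‖ ≤ 0 := by
      apply le_of_forall_pos_le_add
      intro ε hε
      have hpos : 0 < 2 * ‖a‖ + 1 := by positivity
      have := happ (ε / (2 * ‖a‖ + 1)) (by positivity)
      rw [mul_div_cancel₀ _ hpos.ne'] at this
      linarith
    have := norm_le_zero_iff.mp h0
    exact sub_eq_zero.mp this
  intro δ hδ
  -- setup
  set K := ‖c‖ with hK
  set N := ⌈2 * K / δ⌉₊ with hNdef
  have hN : K ≤ -K + N * δ := by
    have h1 : 2 * K / δ ≤ N := Nat.le_ceil _
    have h2 : 2 * K ≤ N * δ := by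
      rw [div_le_iff₀ hδ] at h1
      linarith
    linarith
  set gfun : ℕ → ℝ → ℝ :=
    fun i t => (max (-K + (i + 1 : ℕ) * δ) t - max (-K + (i : ℕ) * δ) t) / δ with hgfun
  have hgc : ∀ i, Continuous (gfun i) := by
    intro i
    exact ((continuous_const.max continuous_id).sub (continuous_const.max continuous_id)).div_const δ
  have hlam_mono : ∀ i : ℕ, -K + (i : ℕ) * δ ≤ -K + (i + 1 : ℕ) * δ := by
    intro i
    have : ((i : ℕ) : ℝ) ≤ ((i + 1 : ℕ) : ℝ) := by exact_mod_cast Nat.le_succ i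
    nlinarith
  have hg0 : ∀ i t, 0 ≤ gfun i t := by
    intro i t
    apply div_nonneg _ hδ.le
    exact sub_nonneg.mpr (max_le_max_right t (hlam_mono i))
  have hg1 : ∀ i t, gfun i t ≤ 1 := by
    intro i t
    rw [hgfun]
    simp only
    rw [div_le_one hδ]
    have h1 : (-K + (i + 1 : ℕ) * δ) - (-K + (i : ℕ) * δ) = δ := by push_cast; ring
    apply sub_le_iff_le_add.mpr
    apply max_le
    · have : -K + (i : ℕ) * δ ≤ max (-K + (i : ℕ) * δ) t := le_max_left _ _
      linarith
    · have : t ≤ max (-K + (i : ℕ) * δ) t := le_max_right _ _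
      have hδδ := hδ.le
      linarith
  -- projections
  have hpexists : ∀ i : ℕ, ∃ p : H →L[ℂ] H, p ∈ M ∧ IsSelfAdjoint p ∧ p * p = p ∧
      ∀ ξ : H, Tendsto (fun m : ℕ => cfc (fun t => gfun i t ^ (m + 1)) c ξ) atTop (nhds (p ξ)) :=
    fun i => exists_projection M hc hcsa (gfun i) (hgc i) (hg0 i) (hg1 i)
  choose p hpM hpsa hpp hptend using hpexists
  set B : H →L[ℂ] H :=
    algebraMap ℝ (H →L[ℂ] H) (-K + N * δ) - δ • ∑ i ∈ Finset.range N, p i with hB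
  have hcomm : a * B = B * a := by
    rw [hB, mul_sub, sub_mul]
    congr 1
    · have := Algebra.commutes (-K + N * δ) a
      exact this.symm
    · rw [mul_smul_comm, smul_mul_assoc, Finset.mul_sum, Finset.sum_mul]
      congr 1
      exact Finset.sum_congr rfl fun i _ => hproj (p i) (hpM i) (hpsa i) (hpp i)
  -- the cfc approximants
  set S : ℕ → H →L[ℂ] H := fun m =>
    algebraMap ℝ (H →L[ℂ] H) (-K + N * δ)
      - δ • ∑ i ∈ Finset.range N, cfc (fun t => gfun i t ^ (m + 1)) c - c with hS
  have hScfc : ∀ m, S m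
      = cfc (fun t => (-K + N * δ) - δ * (∑ i ∈ Finset.range N, gfun i t ^ (m + 1)) - t) c := by
    intro m
    have c1 : ContinuousOn (fun t : ℝ => (-K + N * δ)
        - δ * (∑ i ∈ Finset.range N, gfun i t ^ (m + 1))) (spectrum ℝ c) := by
      apply Continuous.continuousOn
      exact continuous_const.sub
        (continuous_const.mul (continuous_finset_sum _ fun i _ => (hgc i).pow _))
    have c2 : ∀ i ∈ Finset.range N,
        ContinuousOn (fun t : ℝ => gfun i t ^ (m + 1)) (spectrum ℝ c) :=
      fun i _ => ((hgc i).pow _).continuousOn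
    rw [cfc_sub (fun t : ℝ => (-K + N * δ) - δ * (∑ i ∈ Finset.range N, gfun i t ^ (m + 1)))
      (fun t : ℝ => t) c c1 continuous_id.continuousOn]
    rw [cfc_sub (fun _ : ℝ => (-K + N * δ))
      (fun t : ℝ => δ * (∑ i ∈ Finset.range N, gfun i t ^ (m + 1))) c continuousOn_const
      ((continuous_const.mul (continuous_finset_sum _ fun i _ => (hgc i).pow _)).continuousOn)]
    rw [cfc_const _ c]
    have : cfc (fun t : ℝ => δ * (∑ i ∈ Finset.range N, gfun i t ^ (m + 1))) c
        = δ • cfc (fun t : ℝ => ∑ i ∈ Finset.range N, gfun i t ^ (m + 1)) c := by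
      rw [← cfc_smul δ _ c]
      simp only [smul_eq_mul]
    have hsumfun : (fun t : ℝ => ∑ i ∈ Finset.range N, gfun i t ^ (m + 1))
        = ∑ i ∈ Finset.range N, (fun t : ℝ => gfun i t ^ (m + 1)) := by
      funext t; simp
    rw [this, hsumfun, cfc_sum _ c _ c2, cfc_id' ℝ c]
  have hSnorm : ∀ m, ‖S m‖ ≤ δ := by
    intro m
    rw [hScfc m]
    apply norm_cfc_le hδ.le
    intro t ht
    have htK : ‖t‖ ≤ ‖c‖ := spectrum.norm_le_norm_of_mem ht
    rw [Real.norm_eq_abs] at htK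
    have ht1 : -K ≤ t := by rw [hK]; cases abs_le.mp htK; linarith
    have ht2 : t ≤ K := by rw [hK]; exact (abs_le.mp htK).2
    obtain ⟨hlow, hhigh⟩ := real_approx K δ hδ N hN m t ht1 ht2
    rw [Real.norm_eq_abs]
    exact abs_le.mpr ⟨by linarith, hhigh⟩
  have htendB : ∀ ξ : H, Tendsto (fun m => S m ξ) atTop (nhds ((B - c) ξ)) := by
    intro ξ
    have h1 : ∀ m, S m ξ = algebraMap ℝ (H →L[ℂ] H) (-K + N * δ) ξ
        - δ • ∑ i ∈ Finset.range N, cfc (fun t => gfun i t ^ (m + 1)) c ξ - c ξ := by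
      intro m
      rw [hS]
      simp [ContinuousLinearMap.sum_apply]
    have h2 : (B - c) ξ = algebraMap ℝ (H →L[ℂ] H) (-K + N * δ) ξ
        - δ • ∑ i ∈ Finset.range N, p i ξ - c ξ := by
      rw [hB]
      simp [ContinuousLinearMap.sum_apply]
    simp only [h1, h2]
    apply Tendsto.sub _ tendsto_const_nhds
    apply Tendsto.sub tendsto_const_nhds
    apply Tendsto.const_smul
    exact tendsto_finset_sum _ fun i _ => hptend i ξ
  have hBc : ‖B - c‖ ≤ δ := by
    apply opNorm_le_bound _ hδ.le
    intro ξ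
    refine le_of_tendsto (htendB ξ).norm (Eventually.of_forall fun m => ?_)
    calc ‖S m ξ‖ ≤ ‖S m‖ * ‖ξ‖ := (S m).le_opNorm ξ
      _ ≤ δ * ‖ξ‖ := by gcongr; exact hSnorm m
  have hkey : a * (c - B) + (B - c) * a = a * c - c * a := by
    rw [mul_sub, sub_mul, hcomm]
    abel
  calc ‖a * c - c * a‖ = ‖a * (c - B) + (B - c) * a‖ := by rw [hkey]
    _ ≤ ‖a * (c - B)‖ + ‖(B - c) * a‖ := norm_add_le _ _
    _ ≤ ‖a‖ * ‖c - B‖ + ‖B - c‖ * ‖a‖ := by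
        gcongr
        · exact norm_mul_le _ _
        · exact norm_mul_le _ _
    _ ≤ ‖a‖ * δ + δ * ‖a‖ := by
        have : ‖c - B‖ = ‖B - c‖ := by rw [← norm_neg, neg_sub]
        rw [this]
        gcongr
    _ ≤ (2 * ‖a‖ + 1) * δ := by nlinarith [norm_nonneg a, hδ.le]




end VNAux

open VNAux in
/-- A positive element `a` of a von Neumann algebra `M` is central iff `s a s ≤ a`
(in the Loewner order, i.e. `a - s a s` is positive) for every selfadjoint unitary `s ∈ M`. -/
theorem central_iff_sas_le {H : Type*} [NormedAddCommGroup H] [InnerProductSpace ℂ H]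
    [CompleteSpace H] (M : VonNeumannAlgebra H) (a : H →L[ℂ] H) (haM : a ∈ M)
    (hpos : a.IsPositive) :
    (∀ b ∈ M, a * b = b * a) ↔
      ∀ s : H →L[ℂ] H, s ∈ M → IsSelfAdjoint s → s * s = 1 →
        (a - s * a * s).IsPositive := by
  constructor
  · intro hcomm s hsM hssa hss
    have h1 : a * s = s * a := hcomm s hsM
    have h2 : s * a * s = a := by
      rw [← h1, mul_assoc, hss, mul_one]
    rw [h2, sub_self]
    exact ContinuousLinearMap.isPositive_zero
  · intro hyp b hbM
    have hsym : ∀ s ∈ M, IsSelfAdjoint s → s * s = 1 → a * s = s * a :=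
      fun s hs h1 h2 => comm_of_pos_conj h1 h2 (hyp s hs h1 h2)
    have hproj : ∀ p ∈ M, IsSelfAdjoint p → p * p = p → a * p = p * a :=
      fun p hp h1 h2 => comm_of_proj hsym hp h1 h2
    have hsa : ∀ c ∈ M, IsSelfAdjoint c → a * c = c * a :=
      fun c hc h1 => comm_selfadjoint M hproj hc h1
    -- decompose b into selfadjoint parts
    have hb1 : a * (b + star b) = (b + star b) * a := by
      refine hsa _ (add_mem hbM (star_mem hbM)) ?_
      rw [IsSelfAdjoint, star_add, star_star, add_comm]
    have hb2sa : IsSelfAdjoint (Complex.I • (star b - b)) := by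
      rw [IsSelfAdjoint, star_smul, star_sub, star_star]
      simp only [Complex.star_def, Complex.conj_I, neg_smul, neg_sub]
      rw [smul_sub, smul_sub]
      abel
    have hb2 : a * (Complex.I • (star b - b)) = (Complex.I • (star b - b)) * a :=
      hsa _ (M.toStarSubalgebra.smul_mem (sub_mem (star_mem hbM) hbM) Complex.I) hb2sa
    -- combine
    have hb3 : a * (Complex.I • (Complex.I • (star b - b)))
        = (Complex.I • (Complex.I • (star b - b))) * a := by
      rw [mul_smul_comm, smul_mul_assoc, hb2]
    have hII : Complex.I • (Complex.I • (star b - b)) = b - star b := by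
      rw [smul_smul, Complex.I_mul_I, neg_smul, one_smul, neg_sub]
    rw [hII] at hb3
    have hsum : a * (b + b) = (b + b) * a := by
      have e : (b + star b) + (b - star b) = b + b := by abel
      calc a * (b + b) = a * ((b + star b) + (b - star b)) := by rw [e]
        _ = a * (b + star b) + a * (b - star b) := by rw [mul_add]
        _ = (b + star b) * a + (b - star b) * a := by rw [hb1, hb3]
        _ = ((b + star b) + (b - star b)) * a := (add_mul _ _ _).symm
        _ = (b + b) * a := by rw [e]
    have h2 : (2 : ℂ) • (a * b) = (2 : ℂ) • (b * a) := by
      rw [two_smul, two_smul]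
      have := hsum
      rw [mul_add, add_mul] at this
      exact this
    exact smul_right_injective _ two_ne_zero h2
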